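/- If a family (q_{ij})_{i,j ∈ ℤ/Nℤ} in A satisfies the anyonic permutation relations, then for every t ∈ ℤ/Nℤ the rescaled family (ω^{t(j-i)} q_{ij})_{i,j ∈ ℤ/Nℤ} also satisfies the anyonic permutation relations. -/

import Mathlib

noncomputable section

/-- `ω ^ m` for `m ∈ ℤ/Nℤ`; this is well defined (independent of the chosen
representative) as soon as `ω ^ N = 1`. -/
def wpow (N : ℕ) (ω : ℂ) (m : ZMod N) : ℂ := ω ^ m.val

/-- `z ^ m` for `m ∈ ℤ/Nℤ`; well defined when `z ^ N = 1`. -/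
def apow {A : Type*} [Monoid A] (N : ℕ) (z : A) (m : ZMod N) : A := z ^ m.val

/-- The anyonic permutation relations for a family `(q i j)` indexed by `ℤ/Nℤ × ℤ/Nℤ`. -/
def AnyonicPermRel (N : ℕ) [NeZero N] (ω : ℂ) {A : Type*} [Ring A] [StarRing A]
    [Algebra ℂ A] (q : ZMod N → ZMod N → A) : Prop :=
  (∀ i : ZMod N, q 0 i = if i = 0 then 1 else 0) ∧
  (∀ i : ZMod N, q i 0 = if i = 0 then 1 else 0) ∧
  (∀ i j : ZMod N, star (q i j) = wpow N ω (-(i * (i - j))) • q (-i) (-j)) ∧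
  (∀ i j k : ZMod N, q k (i + j) =
    ∑ l : ZMod N, wpow N ω (-(l * (i - k + l))) • (q (k - l) i * q l j)) ∧
  (∀ i j k : ZMod N, q (i + j) k =
    ∑ l : ZMod N, wpow N ω (-(i * (l - j))) • (q j l * q i (k - l)))

/-- The untwisted relations for a family `(a i j)` indexed by `ℤ/Nℤ × ℤ/Nℤ`. -/
def UntwistedRel (N : ℕ) [NeZero N] {A : Type*} [Ring A] [StarRing A]
    (a : ZMod N → ZMod N → A) : Prop :=
  (∀ i : ZMod N, a i 0 = if i = 0 then 1 else 0) ∧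
  (∀ i j : ZMod N, star (a i j) = a (-i) (-j)) ∧
  (∀ i j k : ZMod N, ∑ l : ZMod N, a (k - l) i * a l j = a k (i + j)) ∧
  (∀ i j k : ZMod N, ∑ l : ZMod N, a j l * a i (k - l) = a (i + j) k)

/-- A matrix `(m i j)` over a unital `*`-algebra is unitary. -/
def IsUnitaryMatrix (N : ℕ) [NeZero N] {A : Type*} [Ring A] [StarRing A]
    (m : ZMod N → ZMod N → A) : Prop :=
  (∀ i j : ZMod N, ∑ k : ZMod N, star (m k i) * m k j = if i = j then 1 else 0) ∧
  (∀ i j : ZMod N, ∑ k : ZMod N, m i k * star (m j k) = if i = j then 1 else 0)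

/-- The twisted conjugate matrix `ū_R` with entries `ω^{-i(j-i)} u_{ij}*`. -/
def conjR (N : ℕ) (ω : ℂ) {A : Type*} [Ring A] [StarRing A] [Algebra ℂ A]
    (u : ZMod N → ZMod N → A) : ZMod N → ZMod N → A :=
  fun i j => wpow N ω (-(i * (j - i))) • star (u i j)

/-- A magic unitary: entries are projections and all rows and columns sum to `1`. -/
def IsMagicUnitary (N : ℕ) [NeZero N] {A : Type*} [Ring A] [StarRing A]
    (u : ZMod N → ZMod N → A) : Prop :=
  (∀ i j : ZMod N, u i j * u i j = u i j) ∧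
  (∀ i j : ZMod N, star (u i j) = u i j) ∧
  (∀ j : ZMod N, ∑ i : ZMod N, u i j = 1) ∧
  (∀ i : ZMod N, ∑ j : ZMod N, u i j = 1)



lemma wpow_natCast' (N : ℕ) [NeZero N] {ω : ℂ} (h : ω ^ N = 1) (n : ℕ) :
    wpow N ω (n : ZMod N) = ω ^ n := by
  unfold wpow
  rw [ZMod.val_natCast]
  conv_rhs => rw [← Nat.mod_add_div n N]
  rw [pow_add, pow_mul, h, one_pow, mul_one]

lemma wpow_add' (N : ℕ) [NeZero N] {ω : ℂ} (h : ω ^ N = 1) (a b : ZMod N) :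
    wpow N ω (a + b) = wpow N ω a * wpow N ω b := by
  have := wpow_natCast' N h (a.val + b.val)
  rw [Nat.cast_add, pow_add] at this
  simpa [ZMod.natCast_val, ZMod.cast_id, wpow] using this

lemma wpow_zero' (N : ℕ) [NeZero N] (ω : ℂ) : wpow N ω 0 = 1 := by
  simp [wpow]

lemma star_wpow' (N : ℕ) [NeZero N] {ω : ℂ} (hω : IsPrimitiveRoot ω N) (m : ZMod N) :
    star (wpow N ω m) = wpow N ω (-m) := by
  have h : ω ^ N = 1 := hω.pow_eq_one
  have hn : ‖ω‖ = 1 := by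
    have := hω.norm'_eq_one (NeZero.ne N)
    simpa using this
  have h1 : wpow N ω m * wpow N ω (-m) = 1 := by
    rw [← wpow_add' N h, add_neg_cancel, wpow_zero']
  have hc : star ω * ω = 1 := by
    have h2 := Complex.normSq_eq_conj_mul_self (z := ω)
    have h3 : Complex.normSq ω = 1 := by
      rw [Complex.normSq_eq_norm_sq]
      simp [hn]
    rw [h3] at h2
    simpa using h2.symm
  have h2 : star (wpow N ω m) * wpow N ω m = 1 := by
    unfold wpow
    rw [star_pow, ← mul_pow, hc, one_pow]
  calc star (wpow N ω m) = star (wpow N ω m) * (wpow N ω m * wpow N ω (-m)) := by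
        rw [h1, mul_one]
    _ = wpow N ω (-m) := by rw [← mul_assoc, h2, one_mul]

theorem stmt_1 (N : ℕ) [NeZero N] (hN : 2 ≤ N) (ω : ℂ) (hω : IsPrimitiveRoot ω N)
    {A : Type*} [NormedRing A] [StarRing A] [CStarRing A]
    [NormedAlgebra ℂ A] [CompleteSpace A] [StarModule ℂ A]
    (q : ZMod N → ZMod N → A) (hq : AnyonicPermRel N ω q) (t : ZMod N) :
    AnyonicPermRel N ω (fun i j => wpow N ω (t * (j - i)) • q i j) := by
  obtain ⟨h1, h2, h3, h4, h5⟩ := hq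
  have h : ω ^ N = 1 := hω.pow_eq_one
  refine ⟨?_, ?_, ?_, ?_, ?_⟩
  · intro i
    simp only
    rw [h1 i]
    split_ifs with hi
    · subst hi; simp [wpow_zero']
    · simp
  · intro i
    simp only
    rw [h2 i]
    split_ifs with hi
    · subst hi; simp [wpow_zero']
    · simp
  · intro i j
    simp only [star_smul, h3 i j, star_wpow' N hω, smul_smul]
    congr 1
    simp only [← wpow_add' N h]
    congr 1
    ring
  · intro i j k
    simp only
    rw [h4 i j k, Finset.smul_sum]
    refine Finset.sum_congr rfl fun l _ => ?_
    rw [smul_mul_smul_comm, smul_smul, smul_smul]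
    congr 1
    simp only [← wpow_add' N h]
    congr 1
    ring
  · intro i j k
    simp only
    rw [h5 i j k, Finset.smul_sum]
    refine Finset.sum_congr rfl fun l _ => ?_
    rw [smul_mul_smul_comm, smul_smul, smul_smul]
    congr 1
    simp only [← wpow_add' N h]
    congr 1
    ring
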